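/- In the quantum Euclidean space algebra ℝ³_q extended by an inverse (X³)⁻¹ of X³ and an element R² central satisfying R² = X³X³ − qX⁺X⁻ − q⁻¹X⁻X⁺, the elements t⁺ = −(λq³)⁻¹√(1+q²) X⁺(X³)⁻¹, t⁻ = (q²/λ)√(1+q²) X⁻(X³)⁻¹, t³ = λ⁻¹(1 + R²(X³)⁻²) satisfy the su_q(2) relations: q⁻¹t⁺t⁻ − qt⁻t⁺ = t³, q²t³t⁺ − q⁻²t⁺t³ = (q+q⁻¹)t⁺, and q²t⁻t³ − q⁻²t³t⁻ = (q+q⁻¹)t⁻. -/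

import Mathlib

set_option maxHeartbeats 1000000


/-- In ℝ³_q localized at X³ (with central R² = X³X³ − qX⁺X⁻ − q⁻¹X⁻X⁺),
the elements t⁺ = −(λq³)⁻¹√(1+q²)X⁺(X³)⁻¹, t⁻ = (q²/λ)√(1+q²)X⁻(X³)⁻¹,
t³ = λ⁻¹(1 + R²(X³)⁻²) satisfy the su_q(2) relations. -/
theorem stmt1 (q lam : ℝ) (hq : 1 < q) (hlam : lam = q - q⁻¹)
    (A : Type*) [Ring A] [Algebra ℂ A] (Xp Xm X3 Xi R2 tp tm t3 : A)
    (h1 : X3 * Xp = ((q : ℂ) ^ 2) • (Xp * X3))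
    (h2 : X3 * Xm = ((q : ℂ) ^ 2)⁻¹ • (Xm * X3))
    (h3 : Xm * Xp - Xp * Xm = (lam : ℂ) • (X3 * X3))
    (h4 : Xi * X3 = 1) (h5 : X3 * Xi = 1)
    (hR : R2 = X3 * X3 - (q : ℂ) • (Xp * Xm) - (q : ℂ)⁻¹ • (Xm * Xp))
    (hRp : Commute R2 Xp) (hRm : Commute R2 Xm) (hR3 : Commute R2 X3)
    (hRi : Commute R2 Xi)
    (htp : tp = ((-(lam * q ^ 3)⁻¹ * Real.sqrt (1 + q ^ 2) : ℝ) : ℂ) • (Xp * Xi))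
    (htm : tm = (((q ^ 2 / lam) * Real.sqrt (1 + q ^ 2) : ℝ) : ℂ) • (Xm * Xi))
    (ht3 : t3 = ((lam⁻¹ : ℝ) : ℂ) • (1 + R2 * (Xi * Xi))) :
    (q : ℂ)⁻¹ • (tp * tm) - (q : ℂ) • (tm * tp) = t3 ∧
    (q : ℂ) ^ 2 • (t3 * tp) - ((q : ℂ) ^ 2)⁻¹ • (tp * t3) = ((q : ℂ) + (q : ℂ)⁻¹) • tp ∧
    (q : ℂ) ^ 2 • (tm * t3) - ((q : ℂ) ^ 2)⁻¹ • (t3 * tm) = ((q : ℂ) + (q : ℂ)⁻¹) • tm := by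
  have hq0 : (0:ℝ) < q := lt_trans one_pos hq
  have hqR : (q:ℝ) ≠ 0 := ne_of_gt hq0
  have hQ : (q:ℂ) ≠ 0 := by exact_mod_cast hqR
  have hlamR : lam ≠ 0 := by
    have : 0 < q - q⁻¹ := by
      have : q⁻¹ < 1 := by
        rw [inv_lt_one_iff₀]; right; exact hq
      linarith
    rw [hlam]; exact ne_of_gt this
  have hlamC : (lam:ℂ) ≠ 0 := by exact_mod_cast hlamR
  have hQ2 : ((q:ℂ)^2) ≠ 0 := pow_ne_zero 2 hQ
  have hs : ((Real.sqrt (1 + q ^ 2) : ℝ) : ℂ) ^ 2 = 1 + (q:ℂ)^2 := by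
    have : (Real.sqrt (1 + q ^ 2)) ^ 2 = 1 + q ^ 2 := Real.sq_sqrt (by positivity)
    exact_mod_cast congrArg (fun x : ℝ => (x:ℂ)) this
  -- moved relations
  have h1' : Xp * X3 = ((q:ℂ)^2)⁻¹ • (X3 * Xp) := by
    rw [h1, smul_smul, inv_mul_cancel₀ hQ2, one_smul]
  have h2' : Xm * X3 = ((q:ℂ)^2) • (X3 * Xm) := by
    rw [h2, smul_smul, mul_inv_cancel₀ hQ2, one_smul]
  have hip : Xi * Xp = ((q:ℂ)^2)⁻¹ • (Xp * Xi) := by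
    calc Xi * Xp = Xi * (Xp * X3) * Xi := by
          rw [← mul_assoc, mul_assoc (Xi*Xp) X3 Xi, h5, mul_one]
      _ = Xi * (((q:ℂ)^2)⁻¹ • (X3 * Xp)) * Xi := by rw [h1']
      _ = ((q:ℂ)^2)⁻¹ • (Xi * X3 * (Xp * Xi)) := by
          simp only [mul_smul_comm, smul_mul_assoc, mul_assoc]
      _ = ((q:ℂ)^2)⁻¹ • (Xp * Xi) := by rw [h4, one_mul]
  have him : Xi * Xm = ((q:ℂ)^2) • (Xm * Xi) := by
    calc Xi * Xm = Xi * (Xm * X3) * Xi := by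
          rw [← mul_assoc, mul_assoc (Xi*Xm) X3 Xi, h5, mul_one]
      _ = Xi * (((q:ℂ)^2) • (X3 * Xm)) * Xi := by rw [h2']
      _ = ((q:ℂ)^2) • (Xi * X3 * (Xm * Xi)) := by
          simp only [mul_smul_comm, smul_mul_assoc, mul_assoc]
      _ = ((q:ℂ)^2) • (Xm * Xi) := by rw [h4, one_mul]
  -- pointwise versions
  have K1 : ∀ x : A, Xi * (Xp * x) = ((q:ℂ)^2)⁻¹ • (Xp * (Xi * x)) := fun x => by
    rw [← mul_assoc, hip, smul_mul_assoc, mul_assoc]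
  have K2 : ∀ x : A, Xi * (Xm * x) = ((q:ℂ)^2) • (Xm * (Xi * x)) := fun x => by
    rw [← mul_assoc, him, smul_mul_assoc, mul_assoc]
  have KRp : ∀ x : A, Xp * (R2 * x) = R2 * (Xp * x) := fun x => by
    rw [← mul_assoc, ← hRp.eq, mul_assoc]
  have KRm : ∀ x : A, Xm * (R2 * x) = R2 * (Xm * x) := fun x => by
    rw [← mul_assoc, ← hRm.eq, mul_assoc]
  have KRi : ∀ x : A, Xi * (R2 * x) = R2 * (Xi * x) := fun x => by
    rw [← mul_assoc, ← hRi.eq, mul_assoc]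
  have h4' : ∀ x : A, Xi * (X3 * x) = x := fun x => by rw [← mul_assoc, h4, one_mul]
  have h5' : ∀ x : A, X3 * (Xi * x) = x := fun x => by rw [← mul_assoc, h5, one_mul]
  -- key identities on monomials
  have hM : Xm * (Xp * (Xi * Xi)) = Xp * (Xm * (Xi * Xi)) + (lam:ℂ) • 1 := by
    have := congrArg (fun y : A => y * (Xi * Xi)) h3
    simp only [sub_mul, smul_mul_assoc, mul_assoc] at this
    rw [h5', h5] at this
    linear_combination (norm := module) this
  have hT : R2 * (Xi * Xi)
      = 1 - (q:ℂ) • (Xp * (Xm * (Xi * Xi))) - (q:ℂ)⁻¹ • (Xm * (Xp * (Xi * Xi))) := by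
    have := congrArg (fun y : A => y * (Xi * Xi)) hR
    simp only [sub_mul, smul_mul_assoc, mul_assoc] at this
    rw [h5', h5] at this
    linear_combination (norm := module) this
  have hq21 : (q:ℂ) * (q:ℂ) - 1 ≠ 0 := by
    have h : (q * q - 1 : ℝ) ≠ 0 := by nlinarith
    have e : ((q * q - 1 : ℝ) : ℂ) = (q:ℂ) * (q:ℂ) - 1 := by push_cast; ring
    rw [← e]
    exact Complex.ofReal_ne_zero.mpr h
  have hd : (q:ℂ) ^ 4 - (q:ℂ) ^ 6 * 2 + (q:ℂ) ^ 8 ≠ 0 := by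
    have e : (q:ℂ) ^ 4 - (q:ℂ) ^ 6 * 2 + (q:ℂ) ^ 8 = ((q:ℂ)^2*((q:ℂ)*(q:ℂ)-1))^2 := by ring
    rw [e]
    exact pow_ne_zero 2 (mul_ne_zero (pow_ne_zero 2 hQ) hq21)
  have hd5 : (q:ℂ) ^ 5 - (q:ℂ) ^ 7 * 2 + (q:ℂ) ^ 9 ≠ 0 := by
    have e : (q:ℂ) ^ 5 - (q:ℂ) ^ 7 * 2 + (q:ℂ) ^ 9 = (q:ℂ) * ((q:ℂ)^2*((q:ℂ)*(q:ℂ)-1))^2 := by ring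
    rw [e]
    exact mul_ne_zero hQ (pow_ne_zero 2 (mul_ne_zero (pow_ne_zero 2 hQ) hq21))
  have hd7 : (q:ℂ) ^ 7 - (q:ℂ) ^ 9 * 2 + (q:ℂ) ^ 11 ≠ 0 := by
    have e : (q:ℂ) ^ 7 - (q:ℂ) ^ 9 * 2 + (q:ℂ) ^ 11 = (q:ℂ)^3 * ((q:ℂ)^2*((q:ℂ)*(q:ℂ)-1))^2 := by ring
    rw [e]
    exact mul_ne_zero (pow_ne_zero 3 hQ) (pow_ne_zero 2 (mul_ne_zero (pow_ne_zero 2 hQ) hq21))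
  have hdA : (1 - (q:ℂ) ^ 2 * 2 + (q:ℂ) ^ 4) ≠ 0 := by
    have e : (1 - (q:ℂ) ^ 2 * 2 + (q:ℂ) ^ 4) = ((q:ℂ)*(q:ℂ)-1)^2 := by ring
    rw [e]; exact pow_ne_zero 2 hq21
  have hdB : (-1 + (q:ℂ) ^ 2) ≠ 0 := by
    have e : (-1 + (q:ℂ) ^ 2) = (q:ℂ)*(q:ℂ)-1 := by ring
    rw [e]; exact hq21
  refine ⟨?_, ?_, ?_⟩
  · -- first relation
    rw [htp, htm, ht3]
    simp only [smul_mul_assoc, mul_smul_comm, smul_smul, mul_assoc, K1, K2, mul_one,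
      smul_add, mul_add, hT, hM]
    subst hlam
    match_scalars <;> push_cast <;> field_simp <;> ring_nf <;> try rw [hs]
    all_goals try ring
    all_goals field_simp [hd, hd5, hd7, hdA, hdB]
    all_goals ring
  · rw [htp, ht3]
    simp only [smul_mul_assoc, mul_smul_comm, smul_smul, mul_assoc, K1, K2, KRp, KRi,
      mul_one, one_mul, smul_add, add_mul, mul_add]
    subst hlam
    match_scalars <;> push_cast <;> field_simp <;> ring_nf <;> try rw [hs]
    all_goals try ring
    all_goals field_simp [hd, hd5, hd7, hdA, hdB]
    all_goals ring
  · rw [htm, ht3]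
    simp only [smul_mul_assoc, mul_smul_comm, smul_smul, mul_assoc, K1, K2, KRm, KRi,
      mul_one, one_mul, smul_add, add_mul, mul_add]
    subst hlam
    match_scalars <;> push_cast <;> field_simp <;> ring_nf <;> try rw [hs]
    all_goals try ring
    all_goals field_simp [hd, hd5, hd7, hdA, hdB]
    all_goals ring
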